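/- Let X and Y be integral schemes of finite type over ℂ (or more generally, normal varieties over a field of characteristic zero) and f : X → Y a finite surjective morphism with Y normal. Then the natural map O_Y → f_*O_X admits an O_Y-module retraction given by (1/deg f)·Trace_{X/Y}; in particular, f_*O_X ≅ O_Y ⊕ F as O_Y-modules for some O_Y-module F. -/

import Mathlib

open AlgebraicGeometry CategoryTheory Opposite

namespace TraceRetractionAux

open TopologicalSpace

lemma subsingleton_sections (Y : Scheme) (U : Y.Opens) (h : ¬ Nonempty U) :
    Subsingleton Γ(Y, U) := by
  have hU : U = ⊥ := by
    ext x
    simp only [Opens.coe_bot, Set.mem_empty_iff_false, iff_false]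
    exact fun hx => h ⟨x, hx⟩
  rw [hU]
  infer_instance

lemma nonempty_of_le {Y : Scheme} {A B : Y.Opens} (hAB : A ≤ B) (hA : Nonempty A) :
    Nonempty B := by
  have h1 : (A : Set Y).Nonempty := by simpa using hA
  have h2 : (B : Set Y).Nonempty := h1.mono hAB
  simpa using h2

lemma germToFunctionField_res (Y : Scheme) [IsIntegral Y] {A B : Y.Opens} [hA : Nonempty A]
    [hB : Nonempty B] (hAB : A ≤ B) (u : Γ(Y, B)) :
    Y.germToFunctionField A (Y.presheaf.map (homOfLE hAB).op u) = Y.germToFunctionField B u := by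
  show Y.presheaf.germ A _ _ (Y.presheaf.map _ u) = Y.presheaf.germ B _ _ u
  rw [TopCat.Presheaf.germ_res_apply]

lemma exists_section_of_forall_stalk (Y : Scheme) [IsIntegral Y] (U : Y.Opens) [hU : Nonempty U]
    (t : Y.functionField)
    (h : ∀ (y : Y) (_ : y ∈ U), ∃ c : Y.presheaf.stalk y,
      algebraMap (Y.presheaf.stalk y) Y.functionField c = t) :
    ∃ s : Γ(Y, U), Y.germToFunctionField U s = t := by
  have key : ∀ y : U, ∃ (W : Y.Opens) (_ : (y : Y) ∈ W) (s : Γ(Y, W)),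
      ∀ (_ : Nonempty W), Y.germToFunctionField W s = t := by
    rintro ⟨y, hy⟩
    obtain ⟨c, hc⟩ := h y hy
    obtain ⟨W, m, s, hs⟩ := TopCat.Presheaf.germ_exist Y.presheaf (x := y) c
    refine ⟨W, m, s, fun hW => ?_⟩
    have e : Y.germToFunctionField W s
        = algebraMap (Y.presheaf.stalk y) Y.functionField (Y.presheaf.germ W y m s) := by
      show _ = (Y.presheaf.germ W y m ≫
        Y.presheaf.stalkSpecializes ((genericPoint_spec Y).specializes trivial)) s
      rw [TopCat.Presheaf.germ_stalkSpecializes]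
    rw [e, hs, hc]
  choose W mem sec hsec using key
  let W' : U → Y.Opens := fun y => W y ⊓ U
  have memW' : ∀ y : U, (y : Y) ∈ W' y := fun y => ⟨mem y, y.2⟩
  haveI : ∀ y : U, Nonempty (W' y) := fun y => ⟨⟨y, memW' y⟩⟩
  haveI : ∀ y : U, Nonempty (W y) := fun y => ⟨⟨y, mem y⟩⟩
  let sf : ∀ y : U, Γ(Y, W' y) := fun y =>
    Y.presheaf.map (homOfLE (inf_le_left : W' y ≤ W y)).op (sec y)
  have hsf' : ∀ y : U, Y.germToFunctionField (W' y) (sf y) = t := by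
    intro y
    rw [germToFunctionField_res Y (inf_le_left : W' y ≤ W y) (sec y)]
    exact hsec y ⟨⟨y, mem y⟩⟩
  have compat : TopCat.Presheaf.IsCompatible Y.sheaf.val W' sf := by
    intro i j
    by_cases hij : Nonempty (W' i ⊓ W' j : Y.Opens)
    · apply (Y.germToFunctionField_injective (W' i ⊓ W' j))
      have e1 : Y.germToFunctionField (W' i ⊓ W' j)
          (Y.presheaf.map (homOfLE (inf_le_left : W' i ⊓ W' j ≤ W' i)).op (sf i)) = t := by
        rw [germToFunctionField_res, hsf' i]
      have e2 : Y.germToFunctionField (W' i ⊓ W' j)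
          (Y.presheaf.map (homOfLE (inf_le_right : W' i ⊓ W' j ≤ W' j)).op (sf j)) = t := by
        rw [germToFunctionField_res, hsf' j]
      exact e1.trans e2.symm
    · exact (subsingleton_sections Y _ hij).elim _ _
  obtain ⟨s, hs, -⟩ := Y.sheaf.existsUnique_gluing' W' U
    (fun y => homOfLE (inf_le_right : W' y ≤ U))
    (fun y hy => Opens.mem_iSup.mpr ⟨⟨y, hy⟩, memW' ⟨y, hy⟩⟩) sf compat
  have y : U := hU.some
  refine ⟨s, ?_⟩
  have h2 : Y.germToFunctionField (W' y)
      (Y.presheaf.map (homOfLE (inf_le_right : W' y ≤ U)).op s) = Y.germToFunctionField U s :=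
    germToFunctionField_res Y _ s
  rw [← h2]
  have h3 : Y.presheaf.map (homOfLE (inf_le_right : W' y ≤ U)).op s = sf y := hs y
  rw [h3, hsf' y]

lemma base_genericPoint {X Y : Scheme} (f : X ⟶ Y) [IrreducibleSpace X] [IrreducibleSpace Y]
    [Surjective f] : f.base (genericPoint X) = genericPoint Y := by
  apply ((genericPoint_spec Y).eq _).symm
  rw [isGenericPoint_def, Set.eq_univ_iff_forall]
  intro y
  obtain ⟨x, rfl⟩ := f.surjective y
  have hx : x ∈ closure ({genericPoint X} : Set X) := by
    rw [genericPoint_closure]; trivial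
  have h1 : f.base x ∈ f.base '' closure ({genericPoint X} : Set X) := ⟨x, hx, rfl⟩
  have h2 := image_closure_subset_closure_image (f := f.base) f.continuous h1
  refine closure_mono ?_ h2
  simp

lemma nonempty_preimage {X Y : Scheme} (f : X ⟶ Y) [Surjective f] (U : Y.Opens)
    (hU : Nonempty U) : Nonempty (f ⁻¹ᵁ U) := by
  have h1 : (U : Set Y).Nonempty := by simpa using hU
  obtain ⟨u, hu⟩ := h1
  obtain ⟨x, hx⟩ := f.surjective u
  have h2 : ((f ⁻¹ᵁ U : X.Opens) : Set X).Nonempty := ⟨x, show f.base x ∈ U by rw [hx]; exact hu⟩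
  simpa using h2

/-- The induced map on function fields. -/
noncomputable def ffMap {X Y : Scheme} (f : X ⟶ Y) [IrreducibleSpace X] [IrreducibleSpace Y]
    [Surjective f] : Y.functionField ⟶ X.functionField :=
  Y.presheaf.stalkSpecializes (specializes_of_eq (base_genericPoint f)) ≫
    f.stalkMap (genericPoint X)

lemma germToFunctionField_app {X Y : Scheme} (f : X ⟶ Y) [IsIntegral X] [IsIntegral Y]
    [Surjective f] (U : Y.Opens) [Nonempty U] [Nonempty (f ⁻¹ᵁ U)] (a : Γ(Y, U)) :
    X.germToFunctionField (f ⁻¹ᵁ U) (f.app U a) = ffMap f (Y.germToFunctionField U a) := by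
  have hyU : genericPoint Y ∈ U :=
    ((genericPoint_spec Y).mem_open_set_iff U.isOpen).mpr (by simpa using ‹Nonempty U›)
  have hfxU : f.base (genericPoint X) ∈ U := by rw [base_genericPoint f]; exact hyU
  have e1 : Y.presheaf.stalkSpecializes (specializes_of_eq (base_genericPoint f))
      (Y.germToFunctionField U a) = Y.presheaf.germ U (f.base (genericPoint X)) hfxU a :=
    TopCat.Presheaf.germ_stalkSpecializes_apply _ _ _ _
  show _ = f.stalkMap (genericPoint X) (Y.presheaf.stalkSpecializes _ (Y.germToFunctionField U a))
  rw [e1, Scheme.Hom.germ_stalkMap_apply]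

lemma finite_ffMap {X Y : Scheme} (f : X ⟶ Y) [IsIntegral X] [IsIntegral Y] [IsFinite f]
    [Surjective f] : RingHom.Finite (ffMap f).hom := by
  obtain ⟨y⟩ : Nonempty Y := inferInstance
  obtain ⟨V', hV', hyV, -⟩ := Y.isBasis_affineOpens.exists_subset_of_mem_open
    (Set.mem_univ y) isOpen_univ
  obtain ⟨V, hVaff, rfl⟩ := hV'
  haveI : Nonempty V := ⟨⟨y, hyV⟩⟩
  haveI : Nonempty (f ⁻¹ᵁ V) := nonempty_preimage f V ‹_›
  have hpre : IsAffineOpen (f ⁻¹ᵁ V) := hVaff.preimage f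
  haveI : IsFractionRing Γ(Y, V) Y.functionField :=
    functionField_isFractionRing_of_isAffineOpen Y V hVaff
  haveI : IsFractionRing Γ(X, f ⁻¹ᵁ V) X.functionField :=
    functionField_isFractionRing_of_isAffineOpen X _ hpre
  letI : Algebra Y.functionField X.functionField := RingHom.toAlgebra (ffMap f).hom
  have hfin : RingHom.Finite (f.app V).hom := IsFinite.finite_app f V hVaff
  have hcompat : ∀ a : Γ(Y, V), X.germToFunctionField (f ⁻¹ᵁ V) (f.app V a)
      = algebraMap Y.functionField X.functionField (Y.germToFunctionField V a) :=
    fun a => germToFunctionField_app f V a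
  have hcomp : (algebraMap Y.functionField X.functionField).comp
        (Y.germToFunctionField V).hom
      = (algebraMap Γ(X, f ⁻¹ᵁ V) X.functionField).comp (f.app V).hom := by
    ext a
    exact (hcompat a).symm
  have hintB : ∀ b : Γ(X, f ⁻¹ᵁ V),
      IsIntegral Y.functionField (algebraMap Γ(X, f ⁻¹ᵁ V) X.functionField b) := by
    intro b
    obtain ⟨p, pm, hp⟩ := hfin.to_isIntegral b
    refine ⟨p.map (Y.germToFunctionField V).hom, pm.map _, ?_⟩
    rw [Polynomial.eval₂_map, hcomp, ← Polynomial.hom_eval₂, hp, map_zero]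
  letI : Algebra Γ(Y, V) Γ(X, f ⁻¹ᵁ V) := RingHom.toAlgebra (f.app V).hom
  haveI hmf : Module.Finite Γ(Y, V) Γ(X, f ⁻¹ᵁ V) := hfin
  obtain ⟨T, hT⟩ := hmf.fg_top
  let s : Set X.functionField := (algebraMap Γ(X, f ⁻¹ᵁ V) X.functionField) '' T
  have hsfin : s.Finite := T.finite_toSet.image _
  have hints : ∀ x ∈ s, IsIntegral Y.functionField x := by
    rintro _ ⟨b, -, rfl⟩
    exact hintB b
  have hfg := fg_adjoin_of_finite hsfin hints
  have hmem : ∀ b : Γ(X, f ⁻¹ᵁ V),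
      algebraMap Γ(X, f ⁻¹ᵁ V) X.functionField b ∈ Algebra.adjoin Y.functionField s := by
    intro b
    have hb : b ∈ Submodule.span Γ(Y, V) (T : Set Γ(X, f ⁻¹ᵁ V)) := hT ▸ Submodule.mem_top
    refine Submodule.span_induction ?_ ?_ ?_ ?_ hb
    · intro x hx
      exact Algebra.subset_adjoin ⟨x, hx, rfl⟩
    · rw [map_zero]; exact Subalgebra.zero_mem _
    · intro x y _ _ hx hy
      rw [map_add]; exact Subalgebra.add_mem _ hx hy
    · intro a x _ hx
      have : a • x = f.app V a * x := rfl
      rw [this, map_mul]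
      refine Subalgebra.mul_mem _ ?_ hx
      rw [show (algebraMap Γ(X, f ⁻¹ᵁ V) X.functionField) (f.app V a)
          = algebraMap Y.functionField X.functionField (Y.germToFunctionField V a) from hcompat a]
      exact Subalgebra.algebraMap_mem _ _
  have htop : Algebra.adjoin Y.functionField s = ⊤ := by
    rw [eq_top_iff]
    rintro x -
    obtain ⟨b, s0, hs0, rfl⟩ := IsFractionRing.div_surjective (A := Γ(X, f ⁻¹ᵁ V)) x
    have h3 : (algebraMap Γ(X, f ⁻¹ᵁ V) X.functionField s0)⁻¹
        ∈ Algebra.adjoin Y.functionField s :=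
      Subalgebra.inv_mem_of_algebraic (A := Algebra.adjoin Y.functionField s)
        (x := ⟨_, hmem s0⟩) (isAlgebraic_iff_isIntegral.mpr (hintB s0))
    rw [div_eq_mul_inv]
    exact Subalgebra.mul_mem _ (hmem b) h3
  have : Module.Finite Y.functionField X.functionField := by
    rw [Module.finite_def, ← Algebra.top_toSubmodule, ← htop]
    exact hfg
  exact this

end TraceRetractionAux


open TraceRetractionAux

/-- Let `X` and `Y` be integral schemes of finite type over `ℂ` with `Y`
normal (all stalks of `O_Y` are integrally closed domains), and let `f : X ⟶ Y` be a finite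
surjective morphism (over `ℂ`). Then the natural map `O_Y ⟶ f_* O_X` admits an
`O_Y`-module retraction (given by `(1 / deg f) · Trace_{X/Y}`): there is a family of
additive maps `μ U : Γ(X, f⁻¹U) → Γ(Y, U)`, compatible with restriction, which is
`O_Y`-linear (`μ U (f♯ a * b) = a * μ U b`) and satisfies `μ U ∘ f♯ = id`. In particular
`f_* O_X ≅ O_Y ⊕ F` as `O_Y`-modules. -/
theorem exists_trace_retraction_of_finite_surjective
    (X Y : Scheme) [IsIntegral X] [IsIntegral Y]
    (sX : X ⟶ Spec (CommRingCat.of ℂ)) (sY : Y ⟶ Spec (CommRingCat.of ℂ))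
    [LocallyOfFiniteType sX] [LocallyOfFiniteType sY] [QuasiCompact sX] [QuasiCompact sY]
    (f : X ⟶ Y) (hover : f ≫ sY = sX)
    [IsFinite f] [Surjective f]
    (hYnormal : ∀ y : Y, IsIntegrallyClosed (Y.presheaf.stalk y)) :
    ∃ μ : ∀ U : Y.Opens, (X.presheaf.obj (op (f ⁻¹ᵁ U))) →+ (Y.presheaf.obj (op U)),
      -- `μ` is `O_Y`-linear for the module structure via `f♯`
      (∀ (U : Y.Opens) (a : Y.presheaf.obj (op U)) (b : X.presheaf.obj (op (f ⁻¹ᵁ U))),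
          μ U (f.app U a * b) = a * μ U b) ∧
      -- `μ` is a retraction of the natural map `O_Y ⟶ f_* O_X`
      (∀ (U : Y.Opens) (a : Y.presheaf.obj (op U)), μ U (f.app U a) = a) ∧
      -- `μ` is compatible with restriction, i.e. it is a map of sheaves
      (∀ (U V : Y.Opens) (h : V ≤ U) (b : X.presheaf.obj (op (f ⁻¹ᵁ U))),
          μ V (X.presheaf.map (homOfLE (TopologicalSpace.Opens.map f.base |>.map (homOfLE h)).le).op b) =
            Y.presheaf.map (homOfLE h).op (μ U b)) := by
    classical
  letI : Algebra Y.functionField X.functionField := RingHom.toAlgebra (ffMap f).hom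
  haveI hfd : Module.Finite Y.functionField X.functionField := finite_ffMap f
  -- `ℂ` maps into the function field, so it has characteristic zero
  haveI : Nonempty (⊤ : Y.Opens) := by
    have h1 : ((⊤ : Y.Opens) : Set Y).Nonempty := by
      simpa using (inferInstance : Nonempty Y)
    simpa using h1
  let cc : CommRingCat.of ℂ ⟶ Y.functionField :=
    (Scheme.ΓSpecIso (CommRingCat.of ℂ)).inv ≫ sY.appTop ≫ Y.germToFunctionField ⊤
  haveI : CharZero Y.functionField := by
    let cc' : ℂ →+* Y.functionField := cc.hom
    have hinj : Function.Injective cc' := RingHom.injective cc'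
    refine ⟨fun a b h => ?_⟩
    have h2 : cc' (a : ℂ) = cc' (b : ℂ) := by
      rw [map_natCast cc', map_natCast cc']
      exact h
    exact Nat.cast_injective (hinj h2)
  set n : ℕ := Module.finrank Y.functionField X.functionField with hn_def
  have hn : n ≠ 0 := (Module.finrank_pos (R := Y.functionField) (M := X.functionField)).ne'
  have hnK : (n : Y.functionField) ≠ 0 := Nat.cast_ne_zero.mpr hn
  -- the key existence statement : the normalized trace of a section is a section
  have keymem : ∀ (U : Y.Opens) (hU : Nonempty U) (b : Γ(X, f ⁻¹ᵁ U)),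
      ∃ s : Γ(Y, U), Y.germToFunctionField U s = (n : Y.functionField)⁻¹ *
        Algebra.trace Y.functionField X.functionField
          (@Scheme.germToFunctionField X _ (f ⁻¹ᵁ U) (nonempty_preimage f U hU) b) := by
    intro U hU b
    haveI := hU
    haveI := nonempty_preimage f U hU
    apply exists_section_of_forall_stalk
    intro y hy
    -- choose an affine open neighbourhood of `y` inside `U`
    obtain ⟨V', ⟨V, hVaff, rfl⟩, hyV, hVU⟩ :=
      Y.isBasis_affineOpens.exists_subset_of_mem_open hy U.isOpen
    haveI : Nonempty V := ⟨⟨y, hyV⟩⟩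
    haveI : Nonempty (f ⁻¹ᵁ V) := nonempty_preimage f V ‹_›
    have hle : f ⁻¹ᵁ V ≤ f ⁻¹ᵁ U := fun x hx => hVU hx
    set b' : Γ(X, f ⁻¹ᵁ V) := X.presheaf.map (homOfLE hle).op b with hb'
    have hbb : X.germToFunctionField (f ⁻¹ᵁ V) b' = X.germToFunctionField (f ⁻¹ᵁ U) b :=
      germToFunctionField_res X hle b
    -- the image of `b` in the function field is integral over the stalk at `y`
    letI : Algebra (Y.presheaf.stalk y) X.functionField :=
      RingHom.toAlgebra ((ffMap f).hom.comp
        (algebraMap (Y.presheaf.stalk y) Y.functionField))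
    haveI : IsScalarTower (Y.presheaf.stalk y) Y.functionField X.functionField :=
      IsScalarTower.of_algebraMap_eq' rfl
    have hx_int : IsIntegral (Y.presheaf.stalk y)
        (X.germToFunctionField (f ⁻¹ᵁ U) b) := by
      obtain ⟨p, pm, hp⟩ := (IsFinite.finite_app f V hVaff).to_isIntegral b'
      refine ⟨p.map (Y.presheaf.germ V y hyV).hom, pm.map _, ?_⟩
      rw [Polynomial.eval₂_map]
      have hcomp : ((algebraMap (Y.presheaf.stalk y) X.functionField).comp
            (Y.presheaf.germ V y hyV).hom)
          = ((X.germToFunctionField (f ⁻¹ᵁ V)).hom).comp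
            (f.app V).hom := by
        ext a
        have e1 : algebraMap (Y.presheaf.stalk y) Y.functionField (Y.presheaf.germ V y hyV a)
            = Y.germToFunctionField V a := by
          show (Y.presheaf.germ V y hyV ≫
            Y.presheaf.stalkSpecializes ((genericPoint_spec Y).specializes trivial)) a = _
          rw [TopCat.Presheaf.germ_stalkSpecializes]
        show (ffMap f) (algebraMap (Y.presheaf.stalk y) Y.functionField
          (Y.presheaf.germ V y hyV a)) = _
        rw [e1]
        exact (germToFunctionField_app f V a).symm
      rw [hcomp, ← hbb, ← Polynomial.hom_eval₂, hp, map_zero]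
    haveI := hYnormal y
    have htr : IsIntegral (Y.presheaf.stalk y)
        (Algebra.trace Y.functionField X.functionField
          (X.germToFunctionField (f ⁻¹ᵁ U) b)) :=
      Algebra.isIntegral_trace hx_int
    obtain ⟨c, hc⟩ := IsIntegrallyClosed.isIntegral_iff.mp htr
    -- `n` is invertible in the stalk
    have hunit : IsUnit (n : Y.presheaf.stalk y) := by
      let cc2 : CommRingCat.of ℂ ⟶ Y.presheaf.stalk y :=
        (Scheme.ΓSpecIso (CommRingCat.of ℂ)).inv ≫ sY.appTop ≫
          Y.presheaf.germ ⊤ y trivial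
      have h3 : (n : Y.presheaf.stalk y) = cc2 (n : ℂ) :=
        (map_natCast cc2.hom n).symm
      rw [h3]
      exact (isUnit_iff_ne_zero.mpr (Nat.cast_ne_zero.mpr hn : (n : ℂ) ≠ 0)).map
        cc2.hom
    obtain ⟨u, hu⟩ := hunit
    refine ⟨(↑u⁻¹ : Y.presheaf.stalk y) * c, ?_⟩
    rw [map_mul, hc]
    congr 1
    have h1 : (n : Y.functionField) *
        algebraMap (Y.presheaf.stalk y) Y.functionField (↑u⁻¹ : Y.presheaf.stalk y) = 1 := by
      rw [← map_natCast (algebraMap (Y.presheaf.stalk y) Y.functionField) n, ← hu, ← map_mul,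
        Units.mul_inv, map_one]
    exact ((inv_eq_of_mul_eq_one_right h1).symm)
  choose sec hsec using keymem
  have trace_res : ∀ (U V : Y.Opens) (h : V ≤ U) (hV : Nonempty V) (b : Γ(X, f ⁻¹ᵁ U)),
      (@Scheme.germToFunctionField X _ (f ⁻¹ᵁ V) (nonempty_preimage f V hV)
        (X.presheaf.map (homOfLE ((TopologicalSpace.Opens.map f.base).map (homOfLE h)).le).op b))
      = (@Scheme.germToFunctionField X _ (f ⁻¹ᵁ U)
          (nonempty_preimage f U (nonempty_of_le h hV)) b) := by
    intro U V h hV b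
    haveI := nonempty_preimage f V hV
    haveI := nonempty_preimage f U (nonempty_of_le h hV)
    exact germToFunctionField_res X (((TopologicalSpace.Opens.map f.base).map (homOfLE h)).le) b
  let μ : ∀ U : Y.Opens, Γ(X, f ⁻¹ᵁ U) →+ Γ(Y, U) := fun U =>
    if hU : Nonempty U then
      { toFun := sec U hU
        map_zero' := by
          haveI := hU
          haveI := nonempty_preimage f U hU
          apply Y.germToFunctionField_injective U
          rw [hsec U hU 0, map_zero, map_zero, mul_zero, map_zero]
        map_add' := by
          intro b b'
          haveI := hU
          haveI := nonempty_preimage f U hU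
          apply Y.germToFunctionField_injective U
          rw [map_add, hsec U hU, hsec U hU, hsec U hU, map_add, map_add, mul_add] }
    else 0
  have hμ : ∀ (U : Y.Opens) (hU : Nonempty U) (b : Γ(X, f ⁻¹ᵁ U)), μ U b = sec U hU b := by
    intro U hU b
    show (dite _ _ _ : Γ(X, f ⁻¹ᵁ U) →+ Γ(Y, U)) b = _
    rw [dif_pos hU]
    rfl
  refine ⟨μ, ?_, ?_, ?_⟩
  · -- O_Y-linearity
    intro U a b
    by_cases hU : Nonempty U
    · haveI := hU
      haveI := nonempty_preimage f U hU
      rw [hμ U hU, hμ U hU]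
      apply Y.germToFunctionField_injective U
      have e0 : (ffMap f) (Y.germToFunctionField U a)
          = algebraMap Y.functionField X.functionField (Y.germToFunctionField U a) := rfl
      rw [hsec U hU, map_mul (Y.germToFunctionField U).hom a (sec U hU b), hsec U hU,
        map_mul (X.germToFunctionField (f ⁻¹ᵁ U)).hom (f.app U a) b,
        germToFunctionField_app f U a, e0, ← Algebra.smul_def, map_smul, smul_eq_mul]
      ring
    · haveI := subsingleton_sections Y U hU
      exact Subsingleton.elim _ _
  · -- retraction
    intro U a
    by_cases hU : Nonempty U
    · haveI := hU
      haveI := nonempty_preimage f U hU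
      rw [hμ U hU]
      apply Y.germToFunctionField_injective U
      rw [hsec U hU]
      rw [germToFunctionField_app f U a]
      have : (ffMap f) (Y.germToFunctionField U a)
          = algebraMap Y.functionField X.functionField (Y.germToFunctionField U a) := rfl
      rw [this, Algebra.trace_algebraMap, nsmul_eq_mul, ← mul_assoc,
        inv_mul_cancel₀ hnK, one_mul]
    · haveI := subsingleton_sections Y U hU
      exact Subsingleton.elim _ _
  · -- compatibility with restriction
    intro U V h b
    by_cases hV : Nonempty V
    · have hU : Nonempty U := nonempty_of_le h hV
      haveI := hV
      haveI := hU
      haveI := nonempty_preimage f V hV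
      haveI := nonempty_preimage f U hU
      rw [hμ V hV, hμ U hU]
      apply Y.germToFunctionField_injective V
      rw [hsec V hV]
      rw [germToFunctionField_res Y h (sec U hU b), hsec U hU b]
      rw [trace_res U V h hV b]
    · haveI := subsingleton_sections Y V hV
      exact Subsingleton.elim _ _
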